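/- The operator X acts bidiagonally on the Pastro polynomial basis: for every nonnegative integer n and all real x, (x - q) P_n(q^{-1}x; a, b; q) + (q - bx) P_n(x; a, b; q) = q^{-n} (1 - b q^n) P_{n+1}(x; a, b; q) + q (1 - a^{-1} b q^{-n}) P_n(x; a, b; q). -/

import Mathlib

/-- The q-Pochhammer symbol `(z;q)_k = ∏_{j=0}^{k-1} (1 - z q^j)`. -/
noncomputable def qPoch (q z : ℝ) (k : ℕ) : ℝ :=
  ∏ j ∈ Finset.range k, (1 - z * q ^ j)

lemma qPoch_zero (q z : ℝ) : qPoch q z 0 = 1 := by simp [qPoch]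

lemma qPoch_succ (q z : ℝ) (k : ℕ) :
    qPoch q z (k + 1) = qPoch q z k * (1 - z * q ^ k) := by
  simp [qPoch, Finset.prod_range_succ]

lemma qPoch_succ' (q z : ℝ) (k : ℕ) :
    qPoch q z (k + 1) = qPoch q (z * q) k * (1 - z) := by
  rw [qPoch, Finset.prod_range_succ']
  simp only [pow_zero, mul_one, qPoch]
  congr 1
  apply Finset.prod_congr rfl
  intro j _
  ring

lemma qPoch_ne_zero (q z : ℝ) (k : ℕ) (h : ∀ j < k, z * q ^ j ≠ 1) :
    qPoch q z k ≠ 0 := by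
  apply Finset.prod_ne_zero_iff.2
  intro j hj
  have := h j (Finset.mem_range.1 hj)
  intro hc
  apply this
  linarith [sub_eq_zero.1 hc]

section Aux
variable (q a b : ℝ) (hq : q ≠ 0) (hq1 : ∀ k : ℤ, k ≠ 0 → q ^ k ≠ 1)
  (hbq : ∀ m : ℤ, b * q ^ m ≠ 1) (habq : ∀ m : ℤ, a⁻¹ * b * q ^ m ≠ 1)

include hq hq1 in
lemma hQne : ∀ k, qPoch q q k ≠ 0 := by
  intro k
  apply qPoch_ne_zero
  intro j _
  have := hq1 ((j : ℤ) + 1) (by omega)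
  rwa [zpow_add₀ hq, zpow_natCast, zpow_one, mul_comm] at this

include hbq in
lemma hGne : ∀ k, qPoch q b k ≠ 0 := by
  intro k
  apply qPoch_ne_zero
  intro j _
  have := hbq (j : ℤ)
  rwa [zpow_natCast] at this

include hq habq in
lemma hHne : ∀ (m : ℤ) (k : ℕ), qPoch q (a⁻¹ * b * q ^ m) k ≠ 0 := by
  intro m k
  apply qPoch_ne_zero
  intro j _
  have := habq (m + j)
  rwa [zpow_add₀ hq, zpow_natCast, ← mul_assoc] at this

include hq hq1 in
lemma hFne : ∀ (n k : ℕ), k ≤ n → qPoch q (q ^ (-(n : ℤ))) k ≠ 0 := by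
  intro n k hk
  apply qPoch_ne_zero
  intro j hj
  have := hq1 (-(n : ℤ) + j) (by omega)
  rwa [zpow_add₀ hq, zpow_natCast] at this

end Aux

/-- Coefficient `c_{n,k}` of the monic Pastro polynomial. -/
noncomputable def pastroCoeff (q a b : ℝ) (n k : ℕ) : ℝ :=
  (qPoch q (a⁻¹ * b * q ^ (1 - (n : ℤ))) n * qPoch q q n /
      (qPoch q (q ^ (-(n : ℤ))) n * qPoch q b n)) *
    (qPoch q (q ^ (-(n : ℤ))) k * qPoch q b k /
      (qPoch q (a⁻¹ * b * q ^ (1 - (n : ℤ))) k * qPoch q q k))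


lemma coeff_zero (q a b : ℝ) (hq : q ≠ 0) (n k : ℕ) (h : n < k) :
    pastroCoeff q a b n k = 0 := by
  have hF : qPoch q (q ^ (-(n : ℤ))) k = 0 := by
    apply Finset.prod_eq_zero (Finset.mem_range.2 h)
    rw [← zpow_natCast q n, ← zpow_add₀ hq]
    simp
  rw [pastroCoeff, hF]
  simp

lemma coeff_succ (q a b : ℝ) (hq : q ≠ 0) (hq1 : ∀ k : ℤ, k ≠ 0 → q ^ k ≠ 1)
    (hbq : ∀ m : ℤ, b * q ^ m ≠ 1) (habq : ∀ m : ℤ, a⁻¹ * b * q ^ m ≠ 1)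
    (n k : ℕ) (hk : k ≤ n) :
    pastroCoeff q a b n (k + 1) *
        ((1 - a⁻¹ * b * q ^ (1 - (n : ℤ)) * q ^ k) * (1 - q * q ^ k)) =
      pastroCoeff q a b n k * ((1 - q ^ (-(n : ℤ)) * q ^ k) * (1 - b * q ^ k)) := by
  have hFn := hFne q hq hq1 n n le_rfl
  have hFk := hFne q hq hq1 n k hk
  have hGn := hGne q b hbq n
  have hGk := hGne q b hbq k
  have hHn := hHne q a b hq habq (1 - (n : ℤ)) n
  have hHk := hHne q a b hq habq (1 - (n : ℤ)) k
  have hQn := hQne q hq hq1 n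
  have hQk := hQne q hq hq1 k
  have h1 : (1 : ℝ) - a⁻¹ * b * q ^ (1 - (n : ℤ)) * q ^ k ≠ 0 := by
    have := habq (1 - (n : ℤ) + k)
    rw [zpow_add₀ hq, zpow_natCast, ← mul_assoc] at this
    exact sub_ne_zero.2 (Ne.symm this)
  have h2 : (1 : ℝ) - q * q ^ k ≠ 0 := by
    have := hq1 ((k : ℤ) + 1) (by omega)
    rw [zpow_add₀ hq, zpow_natCast, zpow_one, mul_comm] at this
    exact sub_ne_zero.2 (Ne.symm this)
  rw [pastroCoeff, pastroCoeff, qPoch_succ, qPoch_succ, qPoch_succ, qPoch_succ]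
  set u := q ^ (-(n : ℤ)) with hu
  set w := a⁻¹ * b * q ^ (1 - (n : ℤ)) with hw
  set FN := qPoch q u n
  set FK := qPoch q u k
  set GN := qPoch q b n
  set GK := qPoch q b k
  set HN := qPoch q w n
  set HK := qPoch q w k
  set QN := qPoch q q n
  set QK := qPoch q q k
  have h1' : (1 : ℝ) - q ^ k * w ≠ 0 := by rwa [mul_comm]
  have h2' : (1 : ℝ) - q ^ k * q ≠ 0 := by rwa [mul_comm]
  field_simp

lemma coeff_up (q a b : ℝ) (hq : q ≠ 0) (hq1 : ∀ k : ℤ, k ≠ 0 → q ^ k ≠ 1)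
    (hbq : ∀ m : ℤ, b * q ^ m ≠ 1) (habq : ∀ m : ℤ, a⁻¹ * b * q ^ m ≠ 1)
    (n k : ℕ) (hk : k ≤ n) :
    pastroCoeff q a b (n + 1) (k + 1) * ((1 - b * q ^ n) * (1 - q * q ^ k)) =
      pastroCoeff q a b n k * ((1 - q * q ^ n) * (1 - b * q ^ k)) := by
  have hFn := hFne q hq hq1 n n le_rfl
  have hFk := hFne q hq hq1 n k hk
  have hGn := hGne q b hbq n
  have hGk := hGne q b hbq k
  have hHn := hHne q a b hq habq (1 - (n : ℤ)) n
  have hHk := hHne q a b hq habq (1 - (n : ℤ)) k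
  have hQn := hQne q hq hq1 n
  have hQk := hQne q hq hq1 k
  have h2 : (1 : ℝ) - q * q ^ k ≠ 0 := by
    have := hq1 ((k : ℤ) + 1) (by omega)
    rw [zpow_add₀ hq, zpow_natCast, zpow_one, mul_comm] at this
    exact sub_ne_zero.2 (Ne.symm this)
  have h3 : (1 : ℝ) - b * q ^ n ≠ 0 := by
    have := hbq (n : ℤ)
    rw [zpow_natCast] at this
    exact sub_ne_zero.2 (Ne.symm this)
  have h4 : (1 : ℝ) - q ^ (-((n : ℤ) + 1)) ≠ 0 :=
    sub_ne_zero.2 (Ne.symm (hq1 (-((n : ℤ) + 1)) (by omega)))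
  have h5 : (1 : ℝ) - a⁻¹ * b * q ^ (-(n : ℤ)) ≠ 0 :=
    sub_ne_zero.2 (Ne.symm (habq (-(n : ℤ))))
  have e2 : q ^ (-((n : ℤ) + 1)) * q = q ^ (-(n : ℤ)) := by
    rw [← zpow_add_one₀ hq]
    congr 1
    ring
  have e3 : a⁻¹ * b * q ^ (-(n : ℤ)) * q = a⁻¹ * b * q ^ (1 - (n : ℤ)) := by
    rw [mul_assoc, ← zpow_add_one₀ hq]
    congr 2
    ring
  rw [pastroCoeff, pastroCoeff]
  simp only [Nat.cast_add, Nat.cast_one]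
  rw [show (1 : ℤ) - ((n : ℤ) + 1) = -(n : ℤ) by ring]
  rw [qPoch_succ' q (q ^ (-((n : ℤ) + 1))) n, qPoch_succ' q (q ^ (-((n : ℤ) + 1))) k,
    qPoch_succ' q (a⁻¹ * b * q ^ (-(n : ℤ))) n, qPoch_succ' q (a⁻¹ * b * q ^ (-(n : ℤ))) k,
    qPoch_succ q q n, qPoch_succ q b n, qPoch_succ q b k, qPoch_succ q q k, e2, e3]
  set u := q ^ (-(n : ℤ)) with hu
  set u1 := q ^ (-((n : ℤ) + 1)) with hu1
  set w := a⁻¹ * b * q ^ (1 - (n : ℤ)) with hw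
  set w1 := a⁻¹ * b * q ^ (-(n : ℤ)) with hw1
  set FN := qPoch q u n
  set FK := qPoch q u k
  set GN := qPoch q b n
  set GK := qPoch q b k
  set HN := qPoch q w n
  set HK := qPoch q w k
  set QN := qPoch q q n
  set QK := qPoch q q k
  have h3' : (1 : ℝ) - q ^ n * b ≠ 0 := by rwa [mul_comm]
  field_simp

lemma coeff_up0 (q a b : ℝ) (hq : q ≠ 0) (hq1 : ∀ k : ℤ, k ≠ 0 → q ^ k ≠ 1)
    (hbq : ∀ m : ℤ, b * q ^ m ≠ 1) (habq : ∀ m : ℤ, a⁻¹ * b * q ^ m ≠ 1) (n : ℕ) :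
    pastroCoeff q a b (n + 1) 0 * ((1 - q ^ (-((n : ℤ) + 1))) * (1 - b * q ^ n)) =
      pastroCoeff q a b n 0 * ((1 - a⁻¹ * b * q ^ (-(n : ℤ))) * (1 - q * q ^ n)) := by
  have hFn := hFne q hq hq1 n n le_rfl
  have hGn := hGne q b hbq n
  have hHn := hHne q a b hq habq (1 - (n : ℤ)) n
  have hQn := hQne q hq hq1 n
  have h3 : (1 : ℝ) - b * q ^ n ≠ 0 := by
    have := hbq (n : ℤ)
    rw [zpow_natCast] at this
    exact sub_ne_zero.2 (Ne.symm this)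
  have h4 : (1 : ℝ) - q ^ (-((n : ℤ) + 1)) ≠ 0 :=
    sub_ne_zero.2 (Ne.symm (hq1 (-((n : ℤ) + 1)) (by omega)))
  have h5 : (1 : ℝ) - a⁻¹ * b * q ^ (-(n : ℤ)) ≠ 0 :=
    sub_ne_zero.2 (Ne.symm (habq (-(n : ℤ))))
  have e2 : q ^ (-((n : ℤ) + 1)) * q = q ^ (-(n : ℤ)) := by
    rw [← zpow_add_one₀ hq]
    congr 1
    ring
  have e3 : a⁻¹ * b * q ^ (-(n : ℤ)) * q = a⁻¹ * b * q ^ (1 - (n : ℤ)) := by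
    rw [mul_assoc, ← zpow_add_one₀ hq]
    congr 2
    ring
  rw [pastroCoeff, pastroCoeff]
  simp only [Nat.cast_add, Nat.cast_one]
  rw [show (1 : ℤ) - ((n : ℤ) + 1) = -(n : ℤ) by ring]
  rw [qPoch_succ' q (q ^ (-((n : ℤ) + 1))) n, qPoch_succ' q (a⁻¹ * b * q ^ (-(n : ℤ))) n,
    qPoch_succ q q n, qPoch_succ q b n, e2, e3]
  simp only [qPoch_zero, mul_one, one_mul]
  set u := q ^ (-(n : ℤ))
  set u1 := q ^ (-((n : ℤ) + 1))
  set w := a⁻¹ * b * q ^ (1 - (n : ℤ))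
  set w1 := a⁻¹ * b * q ^ (-(n : ℤ))
  set FN := qPoch q u n
  set GN := qPoch q b n
  set HN := qPoch q w n
  set QN := qPoch q q n
  have h3' : (1 : ℝ) - q ^ n * b ≠ 0 := by rwa [mul_comm]
  field_simp

lemma D0 (q a b : ℝ) (hq : q ≠ 0) (hq1 : ∀ k : ℤ, k ≠ 0 → q ^ k ≠ 1)
    (ha : a ≠ 0) (hbq : ∀ m : ℤ, b * q ^ m ≠ 1) (habq : ∀ m : ℤ, a⁻¹ * b * q ^ m ≠ 1)
    (n : ℕ) :
    (a⁻¹ * b * q ^ (1 - (n : ℤ)) - q) * pastroCoeff q a b n 0 =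
      q ^ (-(n : ℤ)) * (1 - b * q ^ n) * pastroCoeff q a b (n + 1) 0 := by
  have h := coeff_up0 q a b hq hq1 hbq habq n
  have h3 : (1 : ℝ) - b * q ^ n ≠ 0 := by
    have := hbq (n : ℤ)
    rw [zpow_natCast] at this
    exact sub_ne_zero.2 (Ne.symm this)
  have h4 : (1 : ℝ) - q ^ (-((n : ℤ) + 1)) ≠ 0 :=
    sub_ne_zero.2 (Ne.symm (hq1 (-((n : ℤ) + 1)) (by omega)))
  have eu : q ^ (-(n : ℤ)) = (q ^ n)⁻¹ := by rw [zpow_neg, zpow_natCast]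
  have eu1 : q ^ (-((n : ℤ) + 1)) = (q ^ n * q)⁻¹ := by
    rw [zpow_neg, zpow_add₀ hq, zpow_natCast, zpow_one]
  have ew : q ^ (1 - (n : ℤ)) = q / q ^ n := by
    rw [zpow_sub₀ hq, zpow_one, zpow_natCast]
  have hpn : (q : ℝ) ^ n ≠ 0 := pow_ne_zero _ hq
  have key : (a⁻¹ * b * q ^ (1 - (n : ℤ)) - q) * (1 - q ^ (-((n : ℤ) + 1))) =
      q ^ (-(n : ℤ)) * (1 - a⁻¹ * b * q ^ (-(n : ℤ))) * (1 - q * q ^ n) := by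
    rw [eu, eu1, ew]
    field_simp
    ring
  apply mul_right_cancel₀ (mul_ne_zero h4 h3)
  linear_combination (-(q ^ (-(n : ℤ)) * (1 - b * q ^ n))) * h +
    (pastroCoeff q a b n 0 * (1 - b * q ^ n)) * key

lemma Dk (q a b : ℝ) (hq : q ≠ 0) (hq1 : ∀ k : ℤ, k ≠ 0 → q ^ k ≠ 1)
    (ha : a ≠ 0) (hbq : ∀ m : ℤ, b * q ^ m ≠ 1) (habq : ∀ m : ℤ, a⁻¹ * b * q ^ m ≠ 1)
    (n k : ℕ) (hk : k ≤ n) :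
    (q ^ (-(k : ℤ)) - b) * pastroCoeff q a b n k +
        (a⁻¹ * b * q ^ (1 - (n : ℤ)) - q ^ (-(k : ℤ))) * pastroCoeff q a b n (k + 1) =
      q ^ (-(n : ℤ)) * (1 - b * q ^ n) * pastroCoeff q a b (n + 1) (k + 1) := by
  have h1 := coeff_succ q a b hq hq1 hbq habq n k hk
  have h2 := coeff_up q a b hq hq1 hbq habq n k hk
  have hα1 : (1 : ℝ) - a⁻¹ * b * q ^ (1 - (n : ℤ)) * q ^ k ≠ 0 := by
    have := habq (1 - (n : ℤ) + k)
    rw [zpow_add₀ hq, zpow_natCast, ← mul_assoc] at this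
    exact sub_ne_zero.2 (Ne.symm this)
  have hα2 : (1 : ℝ) - q * q ^ k ≠ 0 := by
    have := hq1 ((k : ℤ) + 1) (by omega)
    rw [zpow_add₀ hq, zpow_natCast, zpow_one, mul_comm] at this
    exact sub_ne_zero.2 (Ne.symm this)
  have h3 : (1 : ℝ) - b * q ^ n ≠ 0 := by
    have := hbq (n : ℤ)
    rw [zpow_natCast] at this
    exact sub_ne_zero.2 (Ne.symm this)
  have eu : q ^ (-(n : ℤ)) = (q ^ n)⁻¹ := by rw [zpow_neg, zpow_natCast]
  have ek : q ^ (-(k : ℤ)) = (q ^ k)⁻¹ := by rw [zpow_neg, zpow_natCast]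
  have ew : q ^ (1 - (n : ℤ)) = q / q ^ n := by
    rw [zpow_sub₀ hq, zpow_one, zpow_natCast]
  have hpn : (q : ℝ) ^ n ≠ 0 := pow_ne_zero _ hq
  have hpk : (q : ℝ) ^ k ≠ 0 := pow_ne_zero _ hq
  have key : (q ^ (-(k : ℤ)) - b) *
        ((1 - a⁻¹ * b * q ^ (1 - (n : ℤ)) * q ^ k) * (1 - q * q ^ k)) *
        ((1 - b * q ^ n) * (1 - q * q ^ k)) +
      (a⁻¹ * b * q ^ (1 - (n : ℤ)) - q ^ (-(k : ℤ))) *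
        ((1 - q ^ (-(n : ℤ)) * q ^ k) * (1 - b * q ^ k)) * ((1 - b * q ^ n) * (1 - q * q ^ k)) =
      q ^ (-(n : ℤ)) * (1 - b * q ^ n) * ((1 - q * q ^ n) * (1 - b * q ^ k)) *
        ((1 - a⁻¹ * b * q ^ (1 - (n : ℤ)) * q ^ k) * (1 - q * q ^ k)) := by
    rw [eu, ek, ew]
    field_simp
    ring
  apply mul_right_cancel₀
    (mul_ne_zero (mul_ne_zero hα1 hα2) (mul_ne_zero h3 hα2))
  linear_combination
    ((a⁻¹ * b * q ^ (1 - (n : ℤ)) - q ^ (-(k : ℤ))) * ((1 - b * q ^ n) * (1 - q * q ^ k))) * h1 +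
    (-(q ^ (-(n : ℤ)) * (1 - b * q ^ n) *
      ((1 - a⁻¹ * b * q ^ (1 - (n : ℤ)) * q ^ k) * (1 - q * q ^ k)))) * h2 +
    (pastroCoeff q a b n k) * key

/-- The monic Pastro polynomial `P_n(x;a,b;q)`. -/
noncomputable def pastroP (q a b : ℝ) (n : ℕ) (x : ℝ) : ℝ :=
  ∑ k ∈ Finset.range (n + 1), pastroCoeff q a b n k * x ^ k

/-- The operator `X` acts bidiagonally on the Pastro polynomial basis. -/
theorem pastro_X_bidiagonal (q a b : ℝ) (hq : q ≠ 0) (hq1 : ∀ k : ℤ, k ≠ 0 → q ^ k ≠ 1)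
    (ha : a ≠ 0) (hb : b ≠ 0)
    (hbq : ∀ m : ℤ, b * q ^ m ≠ 1) (habq : ∀ m : ℤ, a⁻¹ * b * q ^ m ≠ 1)
    (n : ℕ) (x : ℝ) :
    (x - q) * pastroP q a b n (q⁻¹ * x) + (q - b * x) * pastroP q a b n x =
      q ^ (-(n : ℤ)) * (1 - b * q ^ n) * pastroP q a b (n + 1) x +
        q * (1 - a⁻¹ * b * q ^ (-(n : ℤ))) * pastroP q a b n x := by
  have hqw : q * (1 - a⁻¹ * b * q ^ (-(n : ℤ))) = q - a⁻¹ * b * q ^ (1 - (n : ℤ)) := by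
    have e3 : a⁻¹ * b * q ^ (-(n : ℤ)) * q = a⁻¹ * b * q ^ (1 - (n : ℤ)) := by
      rw [mul_assoc, ← zpow_add_one₀ hq]
      congr 2
      ring
    rw [mul_sub, mul_one, mul_comm q, e3]
  have hext : ∀ y : ℝ, pastroP q a b n y =
      ∑ k ∈ Finset.range (n + 2), pastroCoeff q a b n k * y ^ k := by
    intro y
    rw [pastroP]
    conv_rhs => rw [show n + 2 = (n + 1) + 1 from rfl, Finset.sum_range_succ]
    rw [coeff_zero q a b hq n (n + 1) (by omega)]
    ring
  rw [hext, hext, pastroP, hqw]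
  rw [show n + 1 + 1 = n + 2 from rfl]
  have hL : (x - q) * (∑ k ∈ Finset.range (n + 2), pastroCoeff q a b n k * (q⁻¹ * x) ^ k) +
      (q - b * x) * (∑ k ∈ Finset.range (n + 2), pastroCoeff q a b n k * x ^ k) =
      ∑ k ∈ Finset.range (n + 2),
        (pastroCoeff q a b n k * ((q ^ k)⁻¹ - b) * x ^ (k + 1) +
          (a⁻¹ * b * q ^ (1 - (n : ℤ)) - q * (q ^ k)⁻¹) * pastroCoeff q a b n k * x ^ k +
          (q - a⁻¹ * b * q ^ (1 - (n : ℤ))) * (pastroCoeff q a b n k * x ^ k)) := by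
    rw [Finset.mul_sum, Finset.mul_sum, ← Finset.sum_add_distrib]
    apply Finset.sum_congr rfl
    intro k _
    have hx : (q⁻¹ * x) ^ k = (q ^ k)⁻¹ * x ^ k := by rw [mul_pow, inv_pow]
    rw [hx]
    ring
  have hR : q ^ (-(n : ℤ)) * (1 - b * q ^ n) *
        (∑ k ∈ Finset.range (n + 2), pastroCoeff q a b (n + 1) k * x ^ k) +
      (q - a⁻¹ * b * q ^ (1 - (n : ℤ))) *
        (∑ k ∈ Finset.range (n + 2), pastroCoeff q a b n k * x ^ k) =
      ∑ k ∈ Finset.range (n + 2),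
        (q ^ (-(n : ℤ)) * (1 - b * q ^ n) * (pastroCoeff q a b (n + 1) k * x ^ k) +
          (q - a⁻¹ * b * q ^ (1 - (n : ℤ))) * (pastroCoeff q a b n k * x ^ k)) := by
    rw [Finset.mul_sum, Finset.mul_sum, ← Finset.sum_add_distrib]
  have hterm : ∀ k ∈ Finset.range (n + 1),
      (pastroCoeff q a b n k * ((q ^ k)⁻¹ - b) * x ^ (k + 1) +
        (a⁻¹ * b * q ^ (1 - (n : ℤ)) - q * (q ^ (k + 1))⁻¹) * pastroCoeff q a b n (k + 1) *
          x ^ (k + 1)) =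
      q ^ (-(n : ℤ)) * (1 - b * q ^ n) * (pastroCoeff q a b (n + 1) (k + 1) * x ^ (k + 1)) := by
    intro k hk
    have hk' : k ≤ n := by
      have := Finset.mem_range.1 hk
      omega
    have hD := Dk q a b hq hq1 ha hbq habq n k hk'
    have ek : q ^ (-(k : ℤ)) = (q ^ k)⁻¹ := by rw [zpow_neg, zpow_natCast]
    have e5 : q * (q ^ (k + 1))⁻¹ = (q ^ k)⁻¹ := by
      rw [pow_succ]
      field_simp
    rw [e5, ← ek]
    linear_combination x ^ (k + 1) * hD
  have E : ∑ k ∈ Finset.range (n + 2),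
        (pastroCoeff q a b n k * ((q ^ k)⁻¹ - b) * x ^ (k + 1) +
          (a⁻¹ * b * q ^ (1 - (n : ℤ)) - q * (q ^ k)⁻¹) * pastroCoeff q a b n k * x ^ k) =
      ∑ k ∈ Finset.range (n + 2),
        q ^ (-(n : ℤ)) * (1 - b * q ^ n) * (pastroCoeff q a b (n + 1) k * x ^ k) := by
    rw [Finset.sum_add_distrib]
    rw [Finset.sum_range_succ'
      (fun k => (a⁻¹ * b * q ^ (1 - (n : ℤ)) - q * (q ^ k)⁻¹) * pastroCoeff q a b n k * x ^ k)
      (n + 1)]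
    rw [Finset.sum_range_succ'
      (fun k => q ^ (-(n : ℤ)) * (1 - b * q ^ n) * (pastroCoeff q a b (n + 1) k * x ^ k)) (n + 1)]
    rw [Finset.sum_range_succ
      (fun k => pastroCoeff q a b n k * ((q ^ k)⁻¹ - b) * x ^ (k + 1)) (n + 1)]
    rw [coeff_zero q a b hq n (n + 1) (by omega)]
    simp only [zero_mul, mul_zero, add_zero, pow_zero, mul_one, inv_one]
    rw [← add_assoc, ← Finset.sum_add_distrib]
    rw [Finset.sum_congr rfl hterm]
    congr 1
    have hD0 := D0 q a b hq hq1 ha hbq habq n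
    linear_combination hD0
  rw [hL, hR, Finset.sum_add_distrib, E, ← Finset.sum_add_distrib]
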